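/- The KKM lemma implies Brouwer's fixed-point theorem: every continuous map from the standard n-simplex to itself has a fixed point. -/

import Mathlib

/-- The KKM lemma (in dimension `n`) implies Brouwer's fixed-point theorem for the
standard `n`-simplex. -/
theorem kkm_implies_brouwer (n : ℕ)
    (kkm : ∀ C : Fin (n + 1) → Set (Fin (n + 1) → ℝ), (∀ i, IsClosed (C i)) →
      (∀ I : Finset (Fin (n + 1)),
        {x ∈ stdSimplex ℝ (Fin (n + 1)) | ∀ i ∉ I, x i = 0} ⊆ ⋃ i ∈ I, C i) →
      ∃ x ∈ stdSimplex ℝ (Fin (n + 1)), ∀ i, x ∈ C i)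
    (f : (Fin (n + 1) → ℝ) → (Fin (n + 1) → ℝ))
    (hf : ContinuousOn f (stdSimplex ℝ (Fin (n + 1))))
    (hmaps : Set.MapsTo f (stdSimplex ℝ (Fin (n + 1))) (stdSimplex ℝ (Fin (n + 1)))) :
    ∃ x ∈ stdSimplex ℝ (Fin (n + 1)), f x = x := by
  set S := stdSimplex ℝ (Fin (n + 1)) with hS
  set C : Fin (n + 1) → Set (Fin (n + 1) → ℝ) :=
    fun i => {x ∈ S | f x i ≤ x i} with hC
  have hclosed : ∀ i, IsClosed (C i) := by
    intro i
    have : C i = S ∩ (fun x => f x i - x i) ⁻¹' Set.Iic 0 := by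
      ext x
      simp only [hC, Set.mem_setOf_eq, Set.mem_inter_iff, Set.mem_preimage,
        Set.mem_Iic, sub_nonpos]
    rw [this]
    exact ContinuousOn.preimage_isClosed_of_isClosed
      ((((continuous_apply i).comp_continuousOn hf)).sub
        (continuous_apply i).continuousOn)
      (isClosed_stdSimplex _ _) isClosed_Iic
  have hcover : ∀ I : Finset (Fin (n + 1)),
      {x ∈ S | ∀ i ∉ I, x i = 0} ⊆ ⋃ i ∈ I, C i := by
    intro I x hx
    obtain ⟨hxS, hx0⟩ := hx
    have hfx : f x ∈ S := hmaps hxS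
    -- sum over I of x i = 1, sum over I of f x i ≤ 1
    by_contra h
    simp only [Set.mem_iUnion, not_exists] at h
    have hlt : ∀ i ∈ I, x i < f x i := by
      intro i hi
      have := h i hi
      simp only [hC, Set.mem_setOf_eq, not_and, not_le] at this
      exact this hxS
    have hsumx : ∑ i ∈ I, x i = 1 := by
      rw [← hxS.2]
      rw [Finset.sum_subset (Finset.subset_univ I)]
      intro i _ hi
      exact hx0 i hi
    have hsumf : ∑ i ∈ I, f x i ≤ 1 := by
      rw [← hfx.2]
      apply Finset.sum_le_sum_of_subset_of_nonneg (Finset.subset_univ I)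
      intro i _ _
      exact hfx.1 i
    have hne : I.Nonempty := by
      by_contra hne
      rw [Finset.not_nonempty_iff_eq_empty] at hne
      simp [hne] at hsumx
    have : ∑ i ∈ I, x i < ∑ i ∈ I, f x i := Finset.sum_lt_sum_of_nonempty hne hlt
    linarith
  obtain ⟨x, hxS, hx⟩ := kkm C hclosed hcover
  refine ⟨x, hxS, ?_⟩
  have hfx : f x ∈ S := hmaps hxS
  have hle : ∀ i, f x i ≤ x i := fun i => (hx i).2
  have hsum : ∑ i, f x i = ∑ i, x i := by rw [hfx.2, hxS.2]
  funext i
  by_contra hne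
  have hlt : f x i < x i := lt_of_le_of_ne (hle i) hne
  have : ∑ j, f x j < ∑ j, x j := by
    apply Finset.sum_lt_sum (fun j _ => hle j) ⟨i, Finset.mem_univ i, hlt⟩
  linarith
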